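/- Let x, y, z be pairwise distinct elements of U. Then the set { w ∈ U \ {x,y,z} : det M(x,y,z,w) = 0 } has exactly 5 elements, where M(x,y,z,w) is the 4×4 matrix with rows (1,1,1,1), (x,y,z,w), (x⁷,y⁷,z⁷,w⁷), (x⁸,y⁸,z⁸,w⁸). Equivalently, there are exactly 5 elements w ∈ U \ {x,y,z} with ∏_{i=1}^{5} ( xy + zw + i(xz + wy) + (6−i)(xw + yz) ) = 0. -/

import Mathlib

namespace Stmt4Aux

variable {E : Type*} [Field E]

noncomputable def wA (x y z c : E) : E :=
  ((1 + c) * (y * z) - x * y - c * (x * z)) / (z - x + c * (y - x))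

set_option maxHeartbeats 1000000 in
theorem det_factor7 (h7 : (7 : E) = 0) (x y z w : E) :
    Matrix.det !![(1 : E), 1, 1, 1; x, y, z, w; x ^ 7, y ^ 7, z ^ 7, w ^ 7;
        x ^ 8, y ^ 8, z ^ 8, w ^ 8] =
      ((y - x) * ((z - x) * ((w - x) * ((z - y) * ((w - y) * (w - z)))))) *
      ((x*y + z*w + 1*(x*z + w*y) - (1+1)*(x*w + y*z)) *
       ((x*y + z*w + 2*(x*z + w*y) - (1+2)*(x*w + y*z)) *
        ((x*y + z*w + 3*(x*z + w*y) - (1+3)*(x*w + y*z)) *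
         ((x*y + z*w + 4*(x*z + w*y) - (1+4)*(x*w + y*z)) *
          (x*y + z*w + 5*(x*z + w*y) - (1+5)*(x*w + y*z)))))) := by
  simp only [Matrix.det_succ_row_zero, Fin.sum_univ_succ, Fin.sum_univ_zero]
  norm_num [Fin.succAbove, Fin.lt_def, Matrix.cons_val_succ,
    show Fin.castSucc (2 : Fin 3) = (2 : Fin 4) from rfl]
  simp only [Matrix.cons_val', Matrix.cons_val_zero, Matrix.cons_val_one, Matrix.cons_val_two, Matrix.head_cons, Matrix.cons_val_three, Matrix.tail_cons, Matrix.head_fin_const]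
  linear_combination ((-2*y^2*z^6*w^8 + 5*y^2*z^7*w^7 - 3*y^2*z^8*w^6 - 10*y^3*z^5*w^8 + 42*y^3*z^6*w^7 - 57*y^3*z^7*w^6 + 25*y^3*z^8*w^5 - 20*y^4*z^4*w^8 + 130*y^4*z^5*w^7 - 300*y^4*z^6*w^6 + 295*y^4*z^7*w^5 - 105*y^4*z^8*w^4 - 7*y^5*z^3*w^8 + 115*y^5*z^4*w^7 - 490*y^5*z^5*w^6 + 890*y^5*z^6*w^5 - 740*y^5*z^7*w^4 + 232*y^5*z^8*w^3 + 22*y^6*z^2*w^8 - 111*y^6*z^3*w^7 + 105*y^6*z^4*w^6 + 350*y^6*z^5*w^5 - 930*y^6*z^6*w^4 + 816*y^6*z^7*w^3 - 252*y^6*z^8*w^2 + 17*y^7*z*w^8 - 164*y^7*z^2*w^7 + 603*y^7*z^3*w^6 - 1075*y^7*z^4*w^5 + 900*y^7*z^5*w^4 - 168*y^7*z^6*w^3 - 216*y^7*z^7*w^2 + 103*y^7*z^8*w - 17*y^8*z*w^7 + 142*y^8*z^2*w^6 - 485*y^8*z^3*w^5 + 875*y^8*z^4*w^4 - 880*y^8*z^5*w^3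 + 468*y^8*z^6*w^2 - 103*y^8*z^7*w + 5*x*y*z^6*w^8 - 10*x*y*z^7*w^7 + 5*x*y*z^8*w^6 + 42*x*y^2*z^5*w^8 - 145*x*y^2*z^6*w^7 + 160*x*y^2*z^7*w^6 - 57*x*y^2*z^8*w^5 + 130*x*y^3*z^4*w^8 - 692*x*y^3*z^5*w^7 + 1305*x*y^3*z^6*w^6 - 1038*x*y^3*z^7*w^5 + 295*x*y^3*z^8*w^4 + 115*x*y^4*z^3*w^8 - 1065*x*y^4*z^4*w^7 + 3340*x*y^4*z^5*w^6 - 4715*x*y^4*z^6*w^5 + 3065*x*y^4*z^7*w^4 - 740*x*y^4*z^8*w^3 - 111*x*y^5*z^2*w^8 + 262*x*y^5*z^3*w^7 + 1015*x*y^5*z^4*w^6 - 4500*x*y^5*z^5*w^5 + 6310*x*y^5*z^6*w^4 - 3792*x*y^5*z^7*w^3 + 816*x*y^5*z^8*w^2 - 164*x*y^6*z*w^8 + 1305*x*y^6*z^2*w^7 - 3864*x*y^6*z^3*w^6 + 5145*x*y^6*z^4*w^5 - 2470*x*y^6*z^5*w^4 - 816*x*y^6*z^6*w^3 + 1080*x*y^6*z^7*w^2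 - 216*x*y^6*z^8*w - 17*x*y^7*w^8 + 328*x*y^7*z*w^7 - 1797*x*y^7*z^2*w^6 + 4562*x*y^7*z^3*w^5 - 6125*x*y^7*z^4*w^4 + 4448*x*y^7*z^5*w^3 - 1728*x*y^7*z^6*w^2 + 432*x*y^7*z^7*w - 103*x*y^7*z^8 + 17*x*y^8*w^7 - 164*x*y^8*z*w^6 + 603*x*y^8*z^2*w^5 - 1075*x*y^8*z^3*w^4 + 900*x*y^8*z^4*w^3 - 168*x*y^8*z^5*w^2 - 216*x*y^8*z^6*w + 103*x*y^8*z^7 - 3*x^2*z^6*w^8 + 5*x^2*z^7*w^7 - 2*x^2*z^8*w^6 - 57*x^2*y*z^5*w^8 + 160*x^2*y*z^6*w^7 - 145*x^2*y*z^7*w^6 + 42*x^2*y*z^8*w^5 - 300*x^2*y^2*z^4*w^8 + 1305*x^2*y^2*z^5*w^7 - 2010*x^2*y^2*z^6*w^6 + 1305*x^2*y^2*z^7*w^5 - 300*x^2*y^2*z^8*w^4 - 490*x^2*y^3*z^3*w^8 + 3340*x^2*y^3*z^4*w^7 - 8173*x^2*y^3*z^5*w^6 + 9148*x^2*y^3*z^6*w^5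 - 4715*x^2*y^3*z^7*w^4 + 890*x^2*y^3*z^8*w^3 + 105*x^2*y^4*z^2*w^8 + 1015*x^2*y^4*z^3*w^7 - 7160*x^2*y^4*z^4*w^6 + 15375*x^2*y^4*z^5*w^5 - 14715*x^2*y^4*z^6*w^4 + 6310*x^2*y^4*z^7*w^3 - 930*x^2*y^4*z^8*w^2 + 603*x^2*y^5*z*w^8 - 3864*x^2*y^5*z^2*w^7 + 8645*x^2*y^5*z^3*w^6 - 7230*x^2*y^5*z^4*w^5 - 270*x^2*y^5*z^5*w^4 + 3100*x^2*y^5*z^6*w^3 - 816*x^2*y^5*z^7*w^2 - 168*x^2*y^5*z^8*w + 142*x^2*y^6*w^8 - 1797*x^2*y^6*z*w^7 + 7518*x^2*y^6*z^2*w^6 - 14665*x^2*y^6*z^3*w^5 + 14750*x^2*y^6*z^4*w^4 - 8180*x^2*y^6*z^5*w^3 + 3492*x^2*y^6*z^6*w^2 - 1728*x^2*y^6*z^7*w + 468*x^2*y^6*z^8 - 164*x^2*y^7*w^7 + 1305*x^2*y^7*z*w^6 - 3864*x^2*y^7*z^2*w^5 + 5145*x^2*y^7*z^3*w^4 - 2470*x^2*y^7*z^4*w^3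 - 816*x^2*y^7*z^5*w^2 + 1080*x^2*y^7*z^6*w - 216*x^2*y^7*z^7 + 22*x^2*y^8*w^6 - 111*x^2*y^8*z*w^5 + 105*x^2*y^8*z^2*w^4 + 350*x^2*y^8*z^3*w^3 - 930*x^2*y^8*z^4*w^2 + 816*x^2*y^8*z^5*w - 252*x^2*y^8*z^6 + 25*x^3*z^5*w^8 - 57*x^3*z^6*w^7 + 42*x^3*z^7*w^6 - 10*x^3*z^8*w^5 + 295*x^3*y*z^4*w^8 - 1038*x^3*y*z^5*w^7 + 1305*x^3*y*z^6*w^6 - 692*x^3*y*z^7*w^5 + 130*x^3*y*z^8*w^4 + 890*x^3*y^2*z^3*w^8 - 4715*x^3*y^2*z^4*w^7 + 9148*x^3*y^2*z^5*w^6 - 8173*x^3*y^2*z^6*w^5 + 3340*x^3*y^2*z^7*w^4 - 490*x^3*y^2*z^8*w^3 + 350*x^3*y^3*z^2*w^8 - 4500*x^3*y^3*z^3*w^7 + 15375*x^3*y^3*z^4*w^6 - 22450*x^3*y^3*z^5*w^5 + 15375*x^3*y^3*z^6*w^4 - 4500*x^3*y^3*z^7*w^3 + 350*x^3*y^3*z^8*w^2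 - 1075*x^3*y^4*z*w^8 + 5145*x^3*y^4*z^2*w^7 - 7230*x^3*y^4*z^3*w^6 + 745*x^3*y^4*z^4*w^5 + 4255*x^3*y^4*z^5*w^4 - 270*x^3*y^4*z^6*w^3 - 2470*x^3*y^4*z^7*w^2 + 900*x^3*y^4*z^8*w - 485*x^3*y^5*w^8 + 4562*x^3*y^5*z*w^7 - 14665*x^3*y^5*z^2*w^6 + 21680*x^3*y^5*z^3*w^5 - 17000*x^3*y^5*z^4*w^4 + 10520*x^3*y^5*z^5*w^3 - 8180*x^3*y^5*z^6*w^2 + 4448*x^3*y^5*z^7*w - 880*x^3*y^5*z^8 + 603*x^3*y^6*w^7 - 3864*x^3*y^6*z*w^6 + 8645*x^3*y^6*z^2*w^5 - 7230*x^3*y^6*z^3*w^4 - 270*x^3*y^6*z^4*w^3 + 3100*x^3*y^6*z^5*w^2 - 816*x^3*y^6*z^6*w - 168*x^3*y^6*z^7 - 111*x^3*y^7*w^6 + 262*x^3*y^7*z*w^5 + 1015*x^3*y^7*z^2*w^4 - 4500*x^3*y^7*z^3*w^3 + 6310*x^3*y^7*z^4*w^2 - 3792*x^3*y^7*z^5*w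 + 816*x^3*y^7*z^6 - 7*x^3*y^8*w^5 + 115*x^3*y^8*z*w^4 - 490*x^3*y^8*z^2*w^3 + 890*x^3*y^8*z^3*w^2 - 740*x^3*y^8*z^4*w + 232*x^3*y^8*z^5 - 105*x^4*z^4*w^8 + 295*x^4*z^5*w^7 - 300*x^4*z^6*w^6 + 130*x^4*z^7*w^5 - 20*x^4*z^8*w^4 - 740*x^4*y*z^3*w^8 + 3065*x^4*y*z^4*w^7 - 4715*x^4*y*z^5*w^6 + 3340*x^4*y*z^6*w^5 - 1065*x^4*y*z^7*w^4 + 115*x^4*y*z^8*w^3 - 930*x^4*y^2*z^2*w^8 + 6310*x^4*y^2*z^3*w^7 - 14715*x^4*y^2*z^4*w^6 + 15375*x^4*y^2*z^5*w^5 - 7160*x^4*y^2*z^6*w^4 + 1015*x^4*y^2*z^7*w^3 + 105*x^4*y^2*z^8*w^2 + 900*x^4*y^3*z*w^8 - 2470*x^4*y^3*z^2*w^7 - 270*x^4*y^3*z^3*w^6 + 4255*x^4*y^3*z^4*w^5 + 745*x^4*y^3*z^5*w^4 - 7230*x^4*y^3*z^6*w^3 + 5145*x^4*y^3*z^7*w^2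 - 1075*x^4*y^3*z^8*w + 875*x^4*y^4*w^8 - 6125*x^4*y^4*z*w^7 + 14750*x^4*y^4*z^2*w^6 - 17000*x^4*y^4*z^3*w^5 + 15000*x^4*y^4*z^4*w^4 - 17000*x^4*y^4*z^5*w^3 + 14750*x^4*y^4*z^6*w^2 - 6125*x^4*y^4*z^7*w + 875*x^4*y^4*z^8 - 1075*x^4*y^5*w^7 + 5145*x^4*y^5*z*w^6 - 7230*x^4*y^5*z^2*w^5 + 745*x^4*y^5*z^3*w^4 + 4255*x^4*y^5*z^4*w^3 - 270*x^4*y^5*z^5*w^2 - 2470*x^4*y^5*z^6*w + 900*x^4*y^5*z^7 + 105*x^4*y^6*w^6 + 1015*x^4*y^6*z*w^5 - 7160*x^4*y^6*z^2*w^4 + 15375*x^4*y^6*z^3*w^3 - 14715*x^4*y^6*z^4*w^2 + 6310*x^4*y^6*z^5*w - 930*x^4*y^6*z^6 + 115*x^4*y^7*w^5 - 1065*x^4*y^7*z*w^4 + 3340*x^4*y^7*z^2*w^3 - 4715*x^4*y^7*z^3*w^2 + 3065*x^4*y^7*z^4*w - 740*x^4*y^7*z^5 - 20*x^4*y^8*w^4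 + 130*x^4*y^8*z*w^3 - 300*x^4*y^8*z^2*w^2 + 295*x^4*y^8*z^3*w - 105*x^4*y^8*z^4 + 232*x^5*z^3*w^8 - 740*x^5*z^4*w^7 + 890*x^5*z^5*w^6 - 490*x^5*z^6*w^5 + 115*x^5*z^7*w^4 - 7*x^5*z^8*w^3 + 816*x^5*y*z^2*w^8 - 3792*x^5*y*z^3*w^7 + 6310*x^5*y*z^4*w^6 - 4500*x^5*y*z^5*w^5 + 1015*x^5*y*z^6*w^4 + 262*x^5*y*z^7*w^3 - 111*x^5*y*z^8*w^2 - 168*x^5*y^2*z*w^8 - 816*x^5*y^2*z^2*w^7 + 3100*x^5*y^2*z^3*w^6 - 270*x^5*y^2*z^4*w^5 - 7230*x^5*y^2*z^5*w^4 + 8645*x^5*y^2*z^6*w^3 - 3864*x^5*y^2*z^7*w^2 + 603*x^5*y^2*z^8*w - 880*x^5*y^3*w^8 + 4448*x^5*y^3*z*w^7 - 8180*x^5*y^3*z^2*w^6 + 10520*x^5*y^3*z^3*w^5 - 17000*x^5*y^3*z^4*w^4 + 21680*x^5*y^3*z^5*w^3 - 14665*x^5*y^3*z^6*w^2 + 4562*x^5*y^3*z^7*w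 - 485*x^5*y^3*z^8 + 900*x^5*y^4*w^7 - 2470*x^5*y^4*z*w^6 - 270*x^5*y^4*z^2*w^5 + 4255*x^5*y^4*z^3*w^4 + 745*x^5*y^4*z^4*w^3 - 7230*x^5*y^4*z^5*w^2 + 5145*x^5*y^4*z^6*w - 1075*x^5*y^4*z^7 + 350*x^5*y^5*w^6 - 4500*x^5*y^5*z*w^5 + 15375*x^5*y^5*z^2*w^4 - 22450*x^5*y^5*z^3*w^3 + 15375*x^5*y^5*z^4*w^2 - 4500*x^5*y^5*z^5*w + 350*x^5*y^5*z^6 - 490*x^5*y^6*w^5 + 3340*x^5*y^6*z*w^4 - 8173*x^5*y^6*z^2*w^3 + 9148*x^5*y^6*z^3*w^2 - 4715*x^5*y^6*z^4*w + 890*x^5*y^6*z^5 + 130*x^5*y^7*w^4 - 692*x^5*y^7*z*w^3 + 1305*x^5*y^7*z^2*w^2 - 1038*x^5*y^7*z^3*w + 295*x^5*y^7*z^4 - 10*x^5*y^8*w^3 + 42*x^5*y^8*z*w^2 - 57*x^5*y^8*z^2*w + 25*x^5*y^8*z^3 - 252*x^6*z^2*w^8 + 816*x^6*z^3*w^7 -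 930*x^6*z^4*w^6 + 350*x^6*z^5*w^5 + 105*x^6*z^6*w^4 - 111*x^6*z^7*w^3 + 22*x^6*z^8*w^2 - 216*x^6*y*z*w^8 + 1080*x^6*y*z^2*w^7 - 816*x^6*y*z^3*w^6 - 2470*x^6*y*z^4*w^5 + 5145*x^6*y*z^5*w^4 - 3864*x^6*y*z^6*w^3 + 1305*x^6*y*z^7*w^2 - 164*x^6*y*z^8*w + 468*x^6*y^2*w^8 - 1728*x^6*y^2*z*w^7 + 3492*x^6*y^2*z^2*w^6 - 8180*x^6*y^2*z^3*w^5 + 14750*x^6*y^2*z^4*w^4 - 14665*x^6*y^2*z^5*w^3 + 7518*x^6*y^2*z^6*w^2 - 1797*x^6*y^2*z^7*w + 142*x^6*y^2*z^8 - 168*x^6*y^3*w^7 - 816*x^6*y^3*z*w^6 + 3100*x^6*y^3*z^2*w^5 - 270*x^6*y^3*z^3*w^4 - 7230*x^6*y^3*z^4*w^3 + 8645*x^6*y^3*z^5*w^2 - 3864*x^6*y^3*z^6*w + 603*x^6*y^3*z^7 - 930*x^6*y^4*w^6 + 6310*x^6*y^4*z*w^5 - 14715*x^6*y^4*z^2*w^4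 + 15375*x^6*y^4*z^3*w^3 - 7160*x^6*y^4*z^4*w^2 + 1015*x^6*y^4*z^5*w + 105*x^6*y^4*z^6 + 890*x^6*y^5*w^5 - 4715*x^6*y^5*z*w^4 + 9148*x^6*y^5*z^2*w^3 - 8173*x^6*y^5*z^3*w^2 + 3340*x^6*y^5*z^4*w - 490*x^6*y^5*z^5 - 300*x^6*y^6*w^4 + 1305*x^6*y^6*z*w^3 - 2010*x^6*y^6*z^2*w^2 + 1305*x^6*y^6*z^3*w - 300*x^6*y^6*z^4 + 42*x^6*y^7*w^3 - 145*x^6*y^7*z*w^2 + 160*x^6*y^7*z^2*w - 57*x^6*y^7*z^3 - 2*x^6*y^8*w^2 + 5*x^6*y^8*z*w - 3*x^6*y^8*z^2 + 103*x^7*z*w^8 - 216*x^7*z^2*w^7 - 168*x^7*z^3*w^6 + 900*x^7*z^4*w^5 - 1075*x^7*z^5*w^4 + 603*x^7*z^6*w^3 - 164*x^7*z^7*w^2 + 17*x^7*z^8*w - 103*x^7*y*w^8 + 432*x^7*y*z*w^7 - 1728*x^7*y*z^2*w^6 + 4448*x^7*y*z^3*w^5 - 6125*x^7*y*z^4*w^4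 + 4562*x^7*y*z^5*w^3 - 1797*x^7*y*z^6*w^2 + 328*x^7*y*z^7*w - 17*x^7*y*z^8 - 216*x^7*y^2*w^7 + 1080*x^7*y^2*z*w^6 - 816*x^7*y^2*z^2*w^5 - 2470*x^7*y^2*z^3*w^4 + 5145*x^7*y^2*z^4*w^3 - 3864*x^7*y^2*z^5*w^2 + 1305*x^7*y^2*z^6*w - 164*x^7*y^2*z^7 + 816*x^7*y^3*w^6 - 3792*x^7*y^3*z*w^5 + 6310*x^7*y^3*z^2*w^4 - 4500*x^7*y^3*z^3*w^3 + 1015*x^7*y^3*z^4*w^2 + 262*x^7*y^3*z^5*w - 111*x^7*y^3*z^6 - 740*x^7*y^4*w^5 + 3065*x^7*y^4*z*w^4 - 4715*x^7*y^4*z^2*w^3 + 3340*x^7*y^4*z^3*w^2 - 1065*x^7*y^4*z^4*w + 115*x^7*y^4*z^5 + 295*x^7*y^5*w^4 - 1038*x^7*y^5*z*w^3 + 1305*x^7*y^5*z^2*w^2 - 692*x^7*y^5*z^3*w + 130*x^7*y^5*z^4 - 57*x^7*y^6*w^3 + 160*x^7*y^6*z*w^2 - 145*x^7*y^6*z^2*w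 + 42*x^7*y^6*z^3 + 5*x^7*y^7*w^2 - 10*x^7*y^7*z*w + 5*x^7*y^7*z^2 - 103*x^8*z*w^7 + 468*x^8*z^2*w^6 - 880*x^8*z^3*w^5 + 875*x^8*z^4*w^4 - 485*x^8*z^5*w^3 + 142*x^8*z^6*w^2 - 17*x^8*z^7*w + 103*x^8*y*w^7 - 216*x^8*y*z*w^6 - 168*x^8*y*z^2*w^5 + 900*x^8*y*z^3*w^4 - 1075*x^8*y*z^4*w^3 + 603*x^8*y*z^5*w^2 - 164*x^8*y*z^6*w + 17*x^8*y*z^7 - 252*x^8*y^2*w^6 + 816*x^8*y^2*z*w^5 - 930*x^8*y^2*z^2*w^4 + 350*x^8*y^2*z^3*w^3 + 105*x^8*y^2*z^4*w^2 - 111*x^8*y^2*z^5*w + 22*x^8*y^2*z^6 + 232*x^8*y^3*w^5 - 740*x^8*y^3*z*w^4 + 890*x^8*y^3*z^2*w^3 - 490*x^8*y^3*z^3*w^2 + 115*x^8*y^3*z^4*w - 7*x^8*y^3*z^5 - 105*x^8*y^4*w^4 + 295*x^8*y^4*z*w^3 - 300*x^8*y^4*z^2*w^2 + 130*x^8*y^4*z^3*w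 - 20*x^8*y^4*z^4 + 25*x^8*y^5*w^3 - 57*x^8*y^5*z*w^2 + 42*x^8*y^5*z^2*w - 10*x^8*y^5*z^3 - 3*x^8*y^6*w^2 + 5*x^8*y^6*z*w - 2*x^8*y^6*z^2)) * h7

theorem D_ne_zero (f : E →+* E) {x y z c : E}
    (hfx : f x = x⁻¹) (hfy : f y = y⁻¹) (hfz : f z = z⁻¹) (hfc : f c = c)
    (hx0 : x ≠ 0) (hy0 : y ≠ 0) (hz0 : z ≠ 0)
    (hc : c ≠ 0) (hxy : x ≠ y) (hyz : y ≠ z) :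
    z - x + c * (y - x) ≠ 0 := by
  intro h
  have h2 : z⁻¹ - x⁻¹ + c * (y⁻¹ - x⁻¹) = 0 := by
    have h2' := congrArg f h
    rwa [map_add, map_sub, map_mul, map_sub, hfx, hfy, hfz, hfc, map_zero] at h2'
  have h2' : y * (x - z) + c * (z * (x - y)) = 0 := by
    have e : y * (x - z) + c * (z * (x - y)) = x * y * z * (z⁻¹ - x⁻¹ + c * (y⁻¹ - x⁻¹)) := by
      field_simp
    rw [e, h2, mul_zero]
  have h3 : c * ((y - x) * (y - z)) = 0 := by linear_combination y * h + h2'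
  rcases mul_eq_zero.mp h3 with h4 | h4
  · exact hc h4
  rcases mul_eq_zero.mp h4 with h5 | h5
  · exact hxy (sub_eq_zero.mp h5).symm
  · exact hyz (sub_eq_zero.mp h5)

theorem wA_mul (f : E →+* E) {x y z c : E}
    (hfx : f x = x⁻¹) (hfy : f y = y⁻¹) (hfz : f z = z⁻¹) (hfc : f c = c)
    (hx0 : x ≠ 0) (hy0 : y ≠ 0) (hz0 : z ≠ 0)
    (hD : z - x + c * (y - x) ≠ 0) :
    f (wA x y z c) * wA x y z c = 1 := by
  have hfD : f (z - x + c * (y - x)) = z⁻¹ - x⁻¹ + c * (y⁻¹ - x⁻¹) := by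
    rw [map_add, map_sub, map_mul, map_sub, hfx, hfy, hfz, hfc]
  have hfD0 : z⁻¹ - x⁻¹ + c * (y⁻¹ - x⁻¹) ≠ 0 := by
    rw [← hfD]
    intro hh
    exact hD (f.injective (by rw [hh, map_zero]))
  have hfN : f ((1 + c) * (y * z) - x * y - c * (x * z)) =
      (1 + c) * (y⁻¹ * z⁻¹) - x⁻¹ * y⁻¹ - c * (x⁻¹ * z⁻¹) := by
    rw [map_sub, map_sub, map_mul, map_mul, map_mul, map_mul, map_mul, map_add, map_one,
      hfx, hfy, hfz, hfc]
  rw [wA, map_div₀, hfN, hfD, div_mul_div_comm,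
    div_eq_one_iff_eq (mul_ne_zero hfD0 hD)]
  field_simp
  ring

theorem eq_wA {x y z c w : E} (hD : z - x + c * (y - x) ≠ 0)
    (hL : x*y + z*w + c*(x*z + w*y) - (1+c)*(x*w + y*z) = 0) :
    w = wA x y z c := by
  rw [wA, eq_div_iff hD]
  linear_combination hL

theorem L_wA {x y z c : E} (hD : z - x + c * (y - x) ≠ 0) :
    x*y + z*(wA x y z c) + c*(x*z + (wA x y z c)*y) - (1+c)*(x*(wA x y z c) + y*z) = 0 := by
  have hw : wA x y z c * (z - x + c * (y - x)) = (1 + c) * (y * z) - x * y - c * (x * z) := by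
    rw [wA, div_mul_cancel₀ _ hD]
  linear_combination hw

theorem wA_ne_x {x y z c : E} (hD : z - x + c * (y - x) ≠ 0)
    (hc1 : 1 + c ≠ 0) (hxy : x ≠ y) (hxz : x ≠ z) : wA x y z c ≠ x := by
  intro h
  rw [wA, div_eq_iff hD] at h
  have h3 : (1 + c) * ((x - y) * (x - z)) = 0 := by linear_combination h
  rcases mul_eq_zero.mp h3 with h4 | h4
  · exact hc1 h4
  rcases mul_eq_zero.mp h4 with h5 | h5
  · exact hxy (sub_eq_zero.mp h5)
  · exact hxz (sub_eq_zero.mp h5)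

theorem wA_ne_y {x y z c : E} (hD : z - x + c * (y - x) ≠ 0)
    (hc : c ≠ 0) (hxy : x ≠ y) (hyz : y ≠ z) : wA x y z c ≠ y := by
  intro h
  rw [wA, div_eq_iff hD] at h
  have h3 : c * ((x - y) * (y - z)) = 0 := by linear_combination h
  rcases mul_eq_zero.mp h3 with h4 | h4
  · exact hc h4
  rcases mul_eq_zero.mp h4 with h5 | h5
  · exact hxy (sub_eq_zero.mp h5)
  · exact hyz (sub_eq_zero.mp h5)

theorem wA_ne_z {x y z c : E} (hD : z - x + c * (y - x) ≠ 0)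
    (hxz : x ≠ z) (hyz : y ≠ z) : wA x y z c ≠ z := by
  intro h
  rw [wA, div_eq_iff hD] at h
  have h3 : (z - y) * (x - z) = 0 := by linear_combination h
  rcases mul_eq_zero.mp h3 with h5 | h5
  · exact hyz (sub_eq_zero.mp h5).symm
  · exact hxz (sub_eq_zero.mp h5)

theorem wA_ne_wA {x y z c d : E} (hDc : z - x + c * (y - x) ≠ 0)
    (hDd : z - x + d * (y - x) ≠ 0) (hcd : d - c ≠ 0)
    (hxy : x ≠ y) (hxz : x ≠ z) (hyz : y ≠ z) :
    wA x y z c ≠ wA x y z d := by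
  intro h
  rw [wA, wA, div_eq_div_iff hDc hDd] at h
  have h3 : (d - c) * ((y - z) * ((z - x) * (y - x))) = 0 := by linear_combination h
  rcases mul_eq_zero.mp h3 with h4 | h4
  · exact hcd h4
  rcases mul_eq_zero.mp h4 with h5 | h5
  · exact hyz (sub_eq_zero.mp h5)
  rcases mul_eq_zero.mp h5 with h6 | h6
  · exact hxz (sub_eq_zero.mp h6).symm
  · exact hxy (sub_eq_zero.mp h6).symm

end Stmt4Aux

open Stmt4Aux in
/-- Lemma 3(2): for pairwise distinct x, y, z ∈ U there are exactly five
w ∈ U \ {x,y,z} with det M(x,y,z,w) = 0. -/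
theorem stmt_4 {m : ℕ} (hm : 2 ≤ m) (q : ℕ) (hq : q = 7 ^ m)
    {E : Type*} [Field E] [Fintype E] (hE : Fintype.card E = q ^ 2)
    (x y z : E) (hx : x ^ (q + 1) = 1) (hy : y ^ (q + 1) = 1) (hz : z ^ (q + 1) = 1)
    (hxy : x ≠ y) (hxz : x ≠ z) (hyz : y ≠ z) :
    {w : E | w ^ (q + 1) = 1 ∧ w ≠ x ∧ w ≠ y ∧ w ≠ z ∧
      Matrix.det !![(1 : E), 1, 1, 1; x, y, z, w; x ^ 7, y ^ 7, z ^ 7, w ^ 7;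
        x ^ 8, y ^ 8, z ^ 8, w ^ 8] = 0}.ncard = 5 := by
  classical
  have h7 : (7 : E) = 0 := by
    have h := FiniteField.cast_card_eq_zero E
    rw [hE, hq] at h
    push_cast at h
    have h1 : (7 : E) ^ (m * 2) = 0 := by rw [pow_mul]; exact_mod_cast h
    exact pow_eq_zero_iff (by omega) |>.mp h1
  haveI hPr : CharP E (ringChar E) := ringChar.charP E
  have hdvd : ringChar E ∣ 7 := ringChar.dvd (by exact_mod_cast h7)
  have hr7 : ringChar E = 7 :=
    ((Nat.Prime.eq_one_or_self_of_dvd (by norm_num) _ hdvd).resolve_left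
      (CharP.char_ne_one E _))
  haveI : CharP E 7 := hr7 ▸ ringChar.charP E
  haveI : Fact (Nat.Prime 7) := ⟨by norm_num⟩
  set f : E →+* E := iterateFrobenius E 7 m with hfdef
  have hf : ∀ a : E, f a = a ^ q := fun a => by
    rw [hfdef, iterateFrobenius_def, hq]
  have h0 : ∀ a : E, a ^ (q + 1) = 1 → a ≠ 0 := by
    intro a ha h
    rw [h, zero_pow (Nat.succ_ne_zero q)] at ha
    exact zero_ne_one ha
  have hinv : ∀ a : E, a ^ (q + 1) = 1 → f a = a⁻¹ := by
    intro a ha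
    rw [hf]
    exact eq_inv_of_mul_eq_one_left (by rw [← pow_succ]; exact ha)
  have hx0 := h0 x hx
  have hy0 := h0 y hy
  have hz0 := h0 z hz
  have hfx := hinv x hx
  have hfy := hinv y hy
  have hfz := hinv z hz
  have hn7 : ∀ n : ℕ, ¬ (7 ∣ n) → ((n : ℕ) : E) ≠ 0 := fun n hn h =>
    hn ((CharP.cast_eq_zero_iff E 7 n).mp h)
  have e1 : (1 : E) ≠ 0 := one_ne_zero
  have e2 : (2 : E) ≠ 0 := fun h => hn7 2 (by norm_num) (by exact_mod_cast h)
  have e3 : (3 : E) ≠ 0 := fun h => hn7 3 (by norm_num) (by exact_mod_cast h)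
  have e4 : (4 : E) ≠ 0 := fun h => hn7 4 (by norm_num) (by exact_mod_cast h)
  have e5 : (5 : E) ≠ 0 := fun h => hn7 5 (by norm_num) (by exact_mod_cast h)
  have e6 : (6 : E) ≠ 0 := fun h => hn7 6 (by norm_num) (by exact_mod_cast h)
  have hf1 : f (1 : E) = 1 := map_one f
  have hf2 : f (2 : E) = 2 := by simpa using map_natCast f 2
  have hf3 : f (3 : E) = 3 := by simpa using map_natCast f 3
  have hf4 : f (4 : E) = 4 := by simpa using map_natCast f 4
  have hf5 : f (5 : E) = 5 := by simpa using map_natCast f 5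
  have hD1 : z - x + 1 * (y - x) ≠ 0 := D_ne_zero f hfx hfy hfz hf1 hx0 hy0 hz0 e1 hxy hyz
  have hD2 : z - x + 2 * (y - x) ≠ 0 := D_ne_zero f hfx hfy hfz hf2 hx0 hy0 hz0 e2 hxy hyz
  have hD3 : z - x + 3 * (y - x) ≠ 0 := D_ne_zero f hfx hfy hfz hf3 hx0 hy0 hz0 e3 hxy hyz
  have hD4 : z - x + 4 * (y - x) ≠ 0 := D_ne_zero f hfx hfy hfz hf4 hx0 hy0 hz0 e4 hxy hyz
  have hD5 : z - x + 5 * (y - x) ≠ 0 := D_ne_zero f hfx hfy hfz hf5 hx0 hy0 hz0 e5 hxy hyz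
  have hU : ∀ c : E, f c = c → c ≠ 0 → (z - x + c * (y - x) ≠ 0) →
      (wA x y z c) ^ (q + 1) = 1 := by
    intro c hfc hc hD
    have hm' := wA_mul f hfx hfy hfz hfc hx0 hy0 hz0 hD
    rw [pow_succ, ← hf (wA x y z c)]
    exact hm'
  have hSet : {w : E | w ^ (q + 1) = 1 ∧ w ≠ x ∧ w ≠ y ∧ w ≠ z ∧
      Matrix.det !![(1 : E), 1, 1, 1; x, y, z, w; x ^ 7, y ^ 7, z ^ 7, w ^ 7;
        x ^ 8, y ^ 8, z ^ 8, w ^ 8] = 0} =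
      (({wA x y z 1, wA x y z 2, wA x y z 3, wA x y z 4, wA x y z 5} : Finset E) : Set E) := by
    ext w
    simp only [Set.mem_setOf_eq, Finset.coe_insert, Set.mem_insert_iff, Finset.coe_singleton,
      Set.mem_singleton_iff]
    constructor
    · rintro ⟨hwU, hwx, hwy, hwz, hd0⟩
      rw [det_factor7 h7 x y z w] at hd0
      have hV : ((y - x) * ((z - x) * ((w - x) * ((z - y) * ((w - y) * (w - z)))))) ≠ 0 :=
        mul_ne_zero (sub_ne_zero.mpr (Ne.symm hxy))
          (mul_ne_zero (sub_ne_zero.mpr (Ne.symm hxz))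
            (mul_ne_zero (sub_ne_zero.mpr hwx)
              (mul_ne_zero (sub_ne_zero.mpr (Ne.symm hyz))
                (mul_ne_zero (sub_ne_zero.mpr hwy) (sub_ne_zero.mpr hwz)))))
      rcases mul_eq_zero.mp hd0 with h | h
      · exact absurd h hV
      rcases mul_eq_zero.mp h with h | h
      · exact Or.inl (eq_wA hD1 h)
      rcases mul_eq_zero.mp h with h | h
      · exact Or.inr (Or.inl (eq_wA hD2 h))
      rcases mul_eq_zero.mp h with h | h
      · exact Or.inr (Or.inr (Or.inl (eq_wA hD3 h)))
      rcases mul_eq_zero.mp h with h | h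
      · exact Or.inr (Or.inr (Or.inr (Or.inl (eq_wA hD4 h))))
      · exact Or.inr (Or.inr (Or.inr (Or.inr (eq_wA hD5 h))))
    · rintro (rfl | rfl | rfl | rfl | rfl)
      · refine ⟨hU 1 hf1 e1 hD1, wA_ne_x hD1 (by rw [show (1:E)+1 = 2 by norm_num]; exact e2) hxy hxz,
          wA_ne_y hD1 e1 hxy hyz, wA_ne_z hD1 hxz hyz, ?_⟩
        rw [det_factor7 h7, L_wA hD1]
        ring
      · refine ⟨hU 2 hf2 e2 hD2, wA_ne_x hD2 (by rw [show (1:E)+2 = 3 by norm_num]; exact e3) hxy hxz,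
          wA_ne_y hD2 e2 hxy hyz, wA_ne_z hD2 hxz hyz, ?_⟩
        rw [det_factor7 h7, L_wA hD2]
        ring
      · refine ⟨hU 3 hf3 e3 hD3, wA_ne_x hD3 (by rw [show (1:E)+3 = 4 by norm_num]; exact e4) hxy hxz,
          wA_ne_y hD3 e3 hxy hyz, wA_ne_z hD3 hxz hyz, ?_⟩
        rw [det_factor7 h7, L_wA hD3]
        ring
      · refine ⟨hU 4 hf4 e4 hD4, wA_ne_x hD4 (by rw [show (1:E)+4 = 5 by norm_num]; exact e5) hxy hxz,
          wA_ne_y hD4 e4 hxy hyz, wA_ne_z hD4 hxz hyz, ?_⟩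
        rw [det_factor7 h7, L_wA hD4]
        ring
      · refine ⟨hU 5 hf5 e5 hD5, wA_ne_x hD5 (by rw [show (1:E)+5 = 6 by norm_num]; exact e6) hxy hxz,
          wA_ne_y hD5 e5 hxy hyz, wA_ne_z hD5 hxz hyz, ?_⟩
        rw [det_factor7 h7, L_wA hD5]
        ring
  rw [hSet, Set.ncard_coe_finset]
  have d12 : wA x y z (1:E) ≠ wA x y z 2 :=
    wA_ne_wA hD1 hD2 (by rw [show (2:E)-1 = 1 by norm_num]; exact e1) hxy hxz hyz
  have d13 : wA x y z (1:E) ≠ wA x y z 3 :=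
    wA_ne_wA hD1 hD3 (by rw [show (3:E)-1 = 2 by norm_num]; exact e2) hxy hxz hyz
  have d14 : wA x y z (1:E) ≠ wA x y z 4 :=
    wA_ne_wA hD1 hD4 (by rw [show (4:E)-1 = 3 by norm_num]; exact e3) hxy hxz hyz
  have d15 : wA x y z (1:E) ≠ wA x y z 5 :=
    wA_ne_wA hD1 hD5 (by rw [show (5:E)-1 = 4 by norm_num]; exact e4) hxy hxz hyz
  have d23 : wA x y z (2:E) ≠ wA x y z 3 :=
    wA_ne_wA hD2 hD3 (by rw [show (3:E)-2 = 1 by norm_num]; exact e1) hxy hxz hyz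
  have d24 : wA x y z (2:E) ≠ wA x y z 4 :=
    wA_ne_wA hD2 hD4 (by rw [show (4:E)-2 = 2 by norm_num]; exact e2) hxy hxz hyz
  have d25 : wA x y z (2:E) ≠ wA x y z 5 :=
    wA_ne_wA hD2 hD5 (by rw [show (5:E)-2 = 3 by norm_num]; exact e3) hxy hxz hyz
  have d34 : wA x y z (3:E) ≠ wA x y z 4 :=
    wA_ne_wA hD3 hD4 (by rw [show (4:E)-3 = 1 by norm_num]; exact e1) hxy hxz hyz
  have d35 : wA x y z (3:E) ≠ wA x y z 5 :=
    wA_ne_wA hD3 hD5 (by rw [show (5:E)-3 = 2 by norm_num]; exact e2) hxy hxz hyz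
  have d45 : wA x y z (4:E) ≠ wA x y z 5 :=
    wA_ne_wA hD4 hD5 (by rw [show (5:E)-4 = 1 by norm_num]; exact e1) hxy hxz hyz
  rw [Finset.card_insert_of_notMem (by simp [d12, d13, d14, d15]),
    Finset.card_insert_of_notMem (by simp [d23, d24, d25]),
    Finset.card_insert_of_notMem (by simp [d34, d35]),
    Finset.card_insert_of_notMem (by simp [d45]),
    Finset.card_singleton]
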